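/- Let n ≥ 1, let p ∈ ℝⁿ be fixed, and for each index i let dᵢ : (0,∞) → ℝ be differentiable. Let K : (0,∞)ⁿ → (0,∞) be differentiable and suppose that K is a 'nominal invariance factor', i.e. for every q ∈ (0,∞)ⁿ the stationarity condition Σᵢ qᵢ · dᵢ'(K(q)·qᵢ) = 0 holds. Then the invariant divergence DI(q) = Σᵢ dᵢ(K(q)·qᵢ) satisfies the fundamental property Σⱼ qⱼ · (∂DI/∂qⱼ)(q) = 0 for every q ∈ (0,∞)ⁿ. -/

import Mathlib

/-- If `K` is a nominal invariance factor, i.e. for every positive `q` the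
stationarity condition `∑ i, q i * dᵢ'(K q * q i) = 0` holds, then the invariant
divergence `DI q = ∑ i, dᵢ (K q * q i)` satisfies the fundamental property
`∑ j, q j * ∂DI/∂qⱼ = 0` on positive vectors. -/
theorem statement9 (n : ℕ) (hn : 1 ≤ n) (p : Fin n → ℝ) (d : Fin n → ℝ → ℝ)
    (hd : ∀ i, ∀ t > (0 : ℝ), DifferentiableAt ℝ (d i) t)
    (K : (Fin n → ℝ) → ℝ)
    (hKpos : ∀ q : Fin n → ℝ, (∀ i, 0 < q i) → 0 < K q)
    (hKdiff : ∀ q : Fin n → ℝ, (∀ i, 0 < q i) → DifferentiableAt ℝ K q)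
    (hstat : ∀ q : Fin n → ℝ, (∀ i, 0 < q i) →
      ∑ i, q i * deriv (d i) (K q * q i) = 0) :
    ∀ q : Fin n → ℝ, (∀ i, 0 < q i) →
      ∑ j, q j *
        fderiv ℝ (fun q' => ∑ i, d i (K q' * q' i)) q (Pi.single j 1) = 0 := by
  intro q hq
  set L := fderiv ℝ K q with hL
  have hK' : HasFDerivAt K L q := (hKdiff q hq).hasFDerivAt
  -- derivative of each inner term
  have hinner : ∀ i : Fin n, HasFDerivAt (fun q' : Fin n → ℝ => K q' * q' i)
      (K q • (ContinuousLinearMap.proj i : (Fin n → ℝ) →L[ℝ] ℝ) + q i • L) q := by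
    intro i
    have hp : HasFDerivAt (fun q' : Fin n → ℝ => q' i)
        (ContinuousLinearMap.proj i : (Fin n → ℝ) →L[ℝ] ℝ) q :=
      (ContinuousLinearMap.proj i : (Fin n → ℝ) →L[ℝ] ℝ).hasFDerivAt
    exact hK'.mul hp
  have hpos : ∀ i : Fin n, 0 < K q * q i := fun i =>
    mul_pos (hKpos q hq) (hq i)
  have hterm : ∀ i : Fin n, HasFDerivAt (fun q' : Fin n → ℝ => d i (K q' * q' i))
      (deriv (d i) (K q * q i) •
        (K q • (ContinuousLinearMap.proj i : (Fin n → ℝ) →L[ℝ] ℝ) + q i • L)) q := by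
    intro i
    have hdi : HasDerivAt (d i) (deriv (d i) (K q * q i)) (K q * q i) :=
      (hd i _ (hpos i)).hasDerivAt
    exact hdi.comp_hasFDerivAt q (hinner i)
  have hsum : HasFDerivAt (fun q' : Fin n → ℝ => ∑ i, d i (K q' * q' i))
      (∑ i, deriv (d i) (K q * q i) •
        (K q • (ContinuousLinearMap.proj i : (Fin n → ℝ) →L[ℝ] ℝ) + q i • L)) q :=
    HasFDerivAt.fun_sum (fun i _ => hterm i)
  rw [hsum.fderiv]
  have happly : ∀ j : Fin n,
      (∑ i, deriv (d i) (K q * q i) •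
        (K q • (ContinuousLinearMap.proj i : (Fin n → ℝ) →L[ℝ] ℝ) + q i • L))
        (Pi.single j 1)
      = ∑ i, deriv (d i) (K q * q i) *
          (K q * (Pi.single j 1 : Fin n → ℝ) i + q i * L (Pi.single j 1)) := by
    intro j
    simp only [ContinuousLinearMap.sum_apply, ContinuousLinearMap.smul_apply,
      ContinuousLinearMap.add_apply, ContinuousLinearMap.proj_apply, smul_eq_mul]
  have hinner_sum : ∀ j : Fin n,
      ∑ i, deriv (d i) (K q * q i) *
          (K q * (Pi.single j 1 : Fin n → ℝ) i + q i * L (Pi.single j 1))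
      = K q * deriv (d j) (K q * q j) := by
    intro j
    have : ∑ i, deriv (d i) (K q * q i) *
          (K q * (Pi.single j 1 : Fin n → ℝ) i + q i * L (Pi.single j 1))
        = (∑ i, deriv (d i) (K q * q i) * (K q * (Pi.single j 1 : Fin n → ℝ) i))
          + L (Pi.single j 1) * ∑ i, q i * deriv (d i) (K q * q i) := by
      rw [Finset.mul_sum]
      rw [← Finset.sum_add_distrib]
      congr 1; ext i; ring
    rw [this, hstat q hq, mul_zero, add_zero]
    rw [Finset.sum_eq_single j]
    · simp [mul_comm]
    · intro i _ hij
      simp [Pi.single_apply, hij]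
    · intro h; exact absurd (Finset.mem_univ j) h
  calc ∑ j, q j * (∑ i, deriv (d i) (K q * q i) •
        (K q • (ContinuousLinearMap.proj i : (Fin n → ℝ) →L[ℝ] ℝ) + q i • L))
        (Pi.single j 1)
      = ∑ j, q j * (K q * deriv (d j) (K q * q j)) := by
        refine Finset.sum_congr rfl fun j _ => ?_
        rw [happly j, hinner_sum j]
    _ = K q * ∑ j, q j * deriv (d j) (K q * q j) := by
        rw [Finset.mul_sum]; refine Finset.sum_congr rfl fun j _ => ?_; ring
    _ = 0 := by rw [hstat q hq, mul_zero]
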